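/- For any matrices U, U* ∈ ℝ^{d₁×r} and V, V* ∈ ℝ^{d₂×r}, letting W ∈ ℝ^{(d₁+d₂)×r} be the vertical stacking of U on top of V and W* the vertical stacking of U* on top of V*, and setting M = UVᵀ, M* = U*V*ᵀ, the following identity holds: ‖WWᵀ − W*W*ᵀ‖_F² = 4‖M − M*‖_F² − 2‖UᵀU* − VᵀV*‖_F² + ‖UᵀU − VᵀV‖_F² + ‖U*ᵀU* − V*ᵀV*‖_F². -/
import Mathlib


open Matrix

/-- Frobenius norm of a real matrix. -/
noncomputable def frob {m n : Type*} [Fintype m] [Fintype n] (A : Matrix m n ℝ) : ℝ :=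
  Real.sqrt (∑ i, ∑ j, A i j ^ 2)

lemma frob_sq {m n : Type*} [Fintype m] [Fintype n] (A : Matrix m n ℝ) :
    frob A ^ 2 = trace (Aᵀ * A) := by
  rw [frob, Real.sq_sqrt (by positivity)]
  simp [trace, diag, mul_apply, sq]
  rw [Finset.sum_comm]

lemma trace_t_swap {n m : Type*} [Fintype n] [Fintype m] (C D : Matrix m n ℝ) :
    trace (Dᵀ * C) = trace (Cᵀ * D) := by
  rw [← trace_transpose (Dᵀ * C), transpose_mul, transpose_transpose, trace_mul_comm]

lemma trace_noT_eq {n : Type*} [Fintype n] (C D : Matrix n n ℝ) :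
    trace (C * Dᵀ) = trace (Cᵀ * D) := by
  rw [trace_mul_comm, trace_t_swap]

lemma frob_sub_sq {m n : Type*} [Fintype m] [Fintype n] (X Y : Matrix m n ℝ) :
    frob (X - Y) ^ 2 = trace (Xᵀ * X) - 2 * trace (Xᵀ * Y) + trace (Yᵀ * Y) := by
  rw [frob_sq, transpose_sub, Matrix.sub_mul, Matrix.mul_sub, Matrix.mul_sub,
    trace_sub, trace_sub, trace_sub, trace_t_swap X Y]
  ring

lemma trace_gram {m n : Type*} [Fintype m] [Fintype n] (A B : Matrix m n ℝ) :
    trace (A * Aᵀ * (B * Bᵀ)) = trace ((Aᵀ * B) * (Aᵀ * B)ᵀ) := by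
  rw [transpose_mul, transpose_transpose, Matrix.mul_assoc, trace_mul_comm]
  simp only [Matrix.mul_assoc]

lemma trace_outer {d₁ d₂ r : ℕ} (U Us : Matrix (Fin d₁) (Fin r) ℝ)
    (V Vs : Matrix (Fin d₂) (Fin r) ℝ) :
    trace ((U * Vᵀ)ᵀ * (Us * Vsᵀ)) = trace ((Uᵀ * Us) * (Vᵀ * Vs)ᵀ) := by
  rw [transpose_mul, transpose_transpose, transpose_mul, transpose_transpose,
    Matrix.mul_assoc, trace_mul_comm]
  simp only [Matrix.mul_assoc]

lemma trace_gram' {m n : Type*} [Fintype m] [Fintype n] (A B : Matrix m n ℝ) :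
    trace ((A * Aᵀ)ᵀ * (B * Bᵀ)) = trace ((Aᵀ * B) * (Aᵀ * B)ᵀ) := by
  rw [transpose_mul, transpose_transpose]; exact trace_gram A B

lemma key {r : ℕ} (A B A' B' C D : Matrix (Fin r) (Fin r) ℝ)
    (hA : Aᵀ = A) (hB : Bᵀ = B) (hA' : A'ᵀ = A') (hB' : B'ᵀ = B') :
    trace ((A + B) * (A + B)ᵀ) - 2 * trace ((C + D) * (C + D)ᵀ)
      + trace ((A' + B') * (A' + B')ᵀ)
    = 4 * (trace (A * Bᵀ) - 2 * trace (C * Dᵀ) + trace (A' * B'ᵀ))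
      - 2 * (trace (Cᵀ * C) - 2 * trace (Cᵀ * D) + trace (Dᵀ * D))
      + (trace (Aᵀ * A) - 2 * trace (Aᵀ * B) + trace (Bᵀ * B))
      + (trace (A'ᵀ * A') - 2 * trace (A'ᵀ * B') + trace (B'ᵀ * B')) := by
  simp only [transpose_add, Matrix.add_mul, Matrix.mul_add, trace_add, hA, hB, hA', hB']
  rw [trace_mul_comm B A, trace_mul_comm B' A',
    trace_noT_eq C D, trace_noT_eq D C, trace_t_swap C D,
    trace_noT_eq C C, trace_noT_eq D D]
  ring

/-- For the vertical stackings `W` of `(U,V)` and `W*` of `(U*,V*)`, with `M = UVᵀ`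
and `M* = U*V*ᵀ`:
`‖WWᵀ − W*W*ᵀ‖_F² = 4‖M − M*‖_F² − 2‖UᵀU* − VᵀV*‖_F² + ‖UᵀU − VᵀV‖_F² + ‖U*ᵀU* − V*ᵀV*‖_F²`. -/
theorem stacked_gram_difference_identity {d₁ d₂ r : ℕ}
    (U Us : Matrix (Fin d₁) (Fin r) ℝ) (V Vs : Matrix (Fin d₂) (Fin r) ℝ) :
    frob (fromRows U V * (fromRows U V)ᵀ - fromRows Us Vs * (fromRows Us Vs)ᵀ) ^ 2
      = 4 * frob (U * Vᵀ - Us * Vsᵀ) ^ 2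
        - 2 * frob (Uᵀ * Us - Vᵀ * Vs) ^ 2
        + frob (Uᵀ * U - Vᵀ * V) ^ 2
        + frob (Usᵀ * Us - Vsᵀ * Vs) ^ 2 := by
  simp only [frob_sub_sq]
  rw [    trace_outer U U V V, trace_outer U Us V Vs, trace_outer Us Us Vs Vs,
    trace_gram' (fromRows U V) (fromRows U V),
    trace_gram' (fromRows U V) (fromRows Us Vs),
    trace_gram' (fromRows Us Vs) (fromRows Us Vs)]
  simp only [transpose_fromRows, fromCols_mul_fromRows]
  exact key (Uᵀ * U) (Vᵀ * V) (Usᵀ * Us) (Vsᵀ * Vs) (Uᵀ * Us) (Vᵀ * Vs) (by rw [transpose_mul, transpose_transpose])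
    (by rw [transpose_mul, transpose_transpose])
    (by rw [transpose_mul, transpose_transpose])
    (by rw [transpose_mul, transpose_transpose])
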